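/- Let (X,d,μ) be a Q-doubling metric measure space with Q > 1, let ε > 0, let u : X → ℝ be integrable on balls and let g ≥ 0 be Borel measurable with g ∈ L^Q(X,μ), such that the pair (u,g) satisfies the Q-Poincaré inequality with constants C and λ. Let x ∈ X and suppose there exist c > 0 and r_0 > 0 such that ∫_{B(x,r)} g^Q dμ ≤ c (log(1/r))^{−Q−ε} for all 0 < r < r_0. Then the sequence (u_{B(x,2^{−j})})_{j∈ℕ} of integral averages of u over the balls B(x,2^{−j}) is a Cauchy sequence; in particular lim_{r→0} ⨍_{B(x,r)} u dμ exists. -/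

import Mathlib

open MeasureTheory Metric Set Filter Topology ENNReal

noncomputable section

/-- Every (open) ball has positive and finite measure. -/
def BallsPosFinite {X : Type*} [MetricSpace X] [MeasurableSpace X]
    (μ : Measure X) : Prop :=
  ∀ (x : X) (r : ℝ), 0 < r → 0 < μ (ball x r) ∧ μ (ball x r) < ⊤

/-- `μ` is doubling with constant `Cμ`. -/
def DoublingWith {X : Type*} [MetricSpace X] [MeasurableSpace X]
    (μ : Measure X) (Cμ : ℝ≥0∞) : Prop :=
  ∀ (x : X) (r : ℝ), 0 < r → μ (ball x (2 * r)) ≤ Cμ * μ (ball x r)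

/-- `μ` is a doubling measure. -/
def Doubling {X : Type*} [MetricSpace X] [MeasurableSpace X]
    (μ : Measure X) : Prop :=
  ∃ Cμ : ℝ≥0∞, 1 ≤ Cμ ∧ Cμ < ⊤ ∧ DoublingWith μ Cμ

/-- Relative lower volume decay with exponent `Q` and constant `C`:
`(s/r)^Q ≤ C · μ(B(x,s))/μ(B(a,r))` whenever `x ∈ B(a,r)` and `0 < s ≤ r`. -/
def LowerVolume {X : Type*} [MetricSpace X] [MeasurableSpace X]
    (μ : Measure X) (Q C : ℝ) : Prop :=
  ∀ (a x : X) (r s : ℝ), x ∈ ball a r → 0 < s → s ≤ r →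
    ENNReal.ofReal ((s / r) ^ Q) ≤ ENNReal.ofReal C * (μ (ball x s) / μ (ball a r))

/-- `(X,d,μ)` is `Q`-doubling: `μ` is doubling and the relative lower volume
decay `(s/r)^Q ≤ C μ(B(x,s))/μ(B(a,r))` holds for some constant `C ≥ 1`. -/
def QDoubling {X : Type*} [MetricSpace X] [MeasurableSpace X]
    (μ : Measure X) (Q : ℝ) : Prop :=
  Doubling μ ∧ ∃ C : ℝ, 1 ≤ C ∧ LowerVolume μ Q C

/-- The pair `(u,g)` satisfies the `p`-Poincaré inequality with constants `C` and `lam`: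
for every ball `B`, `⨍_B |u - u_B| dμ ≤ C diam(B) (⨍_{lam B} g^p dμ)^{1/p}`. -/
def PoincarePair {X : Type*} [MetricSpace X] [MeasurableSpace X]
    (μ : Measure X) (u g : X → ℝ) (p C lam : ℝ) : Prop :=
  ∀ (x : X) (r : ℝ), 0 < r →
    ⨍ y in ball x r, |u y - ⨍ z in ball x r, u z ∂μ| ∂μ ≤
      C * diam (ball x r) * (⨍ y in ball x (lam * r), g y ^ p ∂μ) ^ (1 / p)

/-- A chain of balls `B_i = B(c i, s i)` associated with the point `x` and
radius `r`, with parameters `lam, M, m`. -/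
def IsBallChain {X : Type*} [MetricSpace X] (lam M m : ℝ) (x : X) (r : ℝ)
    (c : ℕ → X) (s : ℕ → ℝ) : Prop :=
  (∀ i, 0 < s i) ∧
  -- (1) `B_0 ⊆ X \ B(x,r)`
  ball (c 0) (s 0) ⊆ (ball x r)ᶜ ∧
  -- (2) `M⁻¹ diam(B_i) ≤ dist(x,B_i) ≤ M diam(B_i)`
  (∀ i, M⁻¹ * diam (ball (c i) (s i)) ≤ infDist x (ball (c i) (s i)) ∧
      infDist x (ball (c i) (s i)) ≤ M * diam (ball (c i) (s i))) ∧
  -- (3) `dist(x,B_i) ≤ M r 2^{-m i}`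
  (∀ i : ℕ, infDist x (ball (c i) (s i)) ≤ M * r * (2 : ℝ) ^ (-(m * i))) ∧
  -- (4) there is a ball `D_i ⊆ B_i ∩ B_{i+1}` with `B_i ∪ B_{i+1} ⊆ M D_i`
  (∀ i : ℕ, ∃ (y : X) (t : ℝ), 0 < t ∧
      ball y t ⊆ ball (c i) (s i) ∩ ball (c (i + 1)) (s (i + 1)) ∧
      ball (c i) (s i) ∪ ball (c (i + 1)) (s (i + 1)) ⊆ ball y (M * t)) ∧
  -- (5) no point of `X` belongs to more than `M` balls `lam B_i`
  (∀ y : X, {i : ℕ | y ∈ ball (c i) (lam * s i)}.Finite ∧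
      ({i : ℕ | y ∈ ball (c i) (lam * s i)}.ncard : ℝ) ≤ M)

/-- `X` satisfies the chain condition: for every `lam ≥ 1` there are constants
`M ≥ 1`, `0 < m ≤ 1` such that for each `x ∈ X` and all `0 < r < diam(X)/8`
there is a chain of balls associated with `x, r`. -/
def ChainCondition (X : Type*) [MetricSpace X] : Prop :=
  ∀ lam : ℝ, 1 ≤ lam → ∃ M m : ℝ, 1 ≤ M ∧ 0 < m ∧ m ≤ 1 ∧
    ∀ (x : X) (r : ℝ), 0 < r →
      ENNReal.ofReal r < EMetric.diam (Set.univ : Set X) / 8 →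
      ∃ (c : ℕ → X) (s : ℕ → ℝ), IsBallChain lam M m x r c s

/-- The gauge function `h(t) = (log(1/t))^p` (as a function on `ℝ≥0∞`). -/
def hGauge (p : ℝ) : ℝ≥0∞ → ℝ≥0∞ :=
  fun t => ENNReal.ofReal (Real.log (1 / t.toReal) ^ p)

/-- The generalized Hausdorff measure with gauge function `h(t) = (log(1/t))^p`. -/
def hausdorffH {X : Type*} [MetricSpace X] [MeasurableSpace X] [BorelSpace X]
    (p : ℝ) : Measure X :=
  Measure.mkMetric (hGauge p)

lemma avg_diff_le {X : Type*} [MetricSpace X] [MeasurableSpace X] [BorelSpace X]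
    (μ : Measure X) (u : X → ℝ) {B' B : Set X}
    (hB'B : B' ⊆ B) (h0 : μ B' ≠ 0) (hfin : μ B ≠ ⊤)
    (hu : IntegrableOn u B μ) :
    |(⨍ y in B', u y ∂μ) - ⨍ y in B, u y ∂μ| ≤
      (μ B).toReal / (μ B').toReal *
        ⨍ y in B, |u y - ⨍ z in B, u z ∂μ| ∂μ := by
  have hfin' : μ B' ≠ ⊤ := fun h => hfin (top_le_iff.mp (h ▸ measure_mono hB'B))
  set m := ⨍ z in B, u z ∂μ with hm
  have h0' : (0:ℝ) < (μ B').toReal := ENNReal.toReal_pos h0 hfin'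
  have hu' : IntegrableOn (fun y => u y - m) B μ :=
    hu.sub (integrableOn_const hfin)
  have habs : IntegrableOn (fun y => |u y - m|) B μ := hu'.abs
  have h1 : (⨍ y in B', u y ∂μ) - m = ⨍ y in B', (u y - m) ∂μ := by
    rw [setAverage_eq, setAverage_eq,
      integral_sub (hu.mono_set hB'B) (integrableOn_const hfin'),
      setIntegral_const]
    simp only [smul_eq_mul, one_div]
    rw [mul_sub, ← mul_assoc, inv_mul_cancel₀ (show μ.real B' ≠ 0 from h0'.ne'), one_mul]
  have h2 : |⨍ y in B', (u y - m) ∂μ| ≤ (μ B').toReal⁻¹ * ∫ y in B', |u y - m| ∂μ := by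
    rw [setAverage_eq]
    calc |(μ B').toReal⁻¹ • ∫ y in B', (u y - m) ∂μ|
        = (μ B').toReal⁻¹ * |∫ y in B', (u y - m) ∂μ| := by
          rw [smul_eq_mul, abs_mul, abs_of_nonneg (by positivity)]
      _ ≤ (μ B').toReal⁻¹ * ∫ y in B', |u y - m| ∂μ := by
          gcongr
          simpa [Real.norm_eq_abs] using
            norm_integral_le_integral_norm (fun y => u y - m) (μ := μ.restrict B')
  have h3 : ∫ y in B', |u y - m| ∂μ ≤ ∫ y in B, |u y - m| ∂μ :=
    setIntegral_mono_set habs (Filter.Eventually.of_forall fun y => abs_nonneg _)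
      (HasSubset.Subset.eventuallyLE hB'B)
  have h4 : (μ B').toReal⁻¹ * ∫ y in B, |u y - m| ∂μ
      = (μ B).toReal / (μ B').toReal * ⨍ y in B, |u y - m| ∂μ := by
    rw [setAverage_eq, smul_eq_mul, measureReal_def]
    rcases eq_or_ne (μ B) 0 with hB0 | hB0
    · exact absurd (le_antisymm (hB0 ▸ measure_mono hB'B) zero_le) h0
    · have : (0:ℝ) < (μ B).toReal := ENNReal.toReal_pos hB0 hfin
      field_simp
  calc |(⨍ y in B', u y ∂μ) - m| = |⨍ y in B', (u y - m) ∂μ| := by rw [h1]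
    _ ≤ (μ B').toReal⁻¹ * ∫ y in B', |u y - m| ∂μ := h2
    _ ≤ (μ B').toReal⁻¹ * ∫ y in B, |u y - m| ∂μ := by gcongr
    _ = _ := h4


/-- In a `Q`-doubling space, if `(u,g)` satisfies the `Q`-Poincaré inequality with
`g ∈ L^Q`, and at the point `x` one has `∫_{B(x,r)} g^Q dμ ≤ c log^{-Q-ε}(1/r)` for all
sufficiently small `r`, then the sequence of averages `u_{B(x,2^{-j})}` is Cauchy; in
particular the limit of averages `⨍_{B(x,r)} u dμ` as `r → 0` exists. -/
theorem averages_cauchy_of_log_decay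
    {X : Type*} [MetricSpace X] [MeasurableSpace X] [BorelSpace X]
    (μ : Measure X) (hballs : BallsPosFinite μ)
    (Q : ℝ) (hQ : 1 < Q) (hQdoub : QDoubling μ Q)
    (ε : ℝ) (hε : 0 < ε)
    (u g : X → ℝ)
    (hu : ∀ (x : X) (r : ℝ), 0 < r → IntegrableOn u (ball x r) μ)
    (hg0 : ∀ x, 0 ≤ g x) (hgm : Measurable g)
    (hgLQ : MemLp g (ENNReal.ofReal Q) μ)
    (C lam : ℝ) (hC : 0 < C) (hlam : 1 ≤ lam)
    (hPI : PoincarePair μ u g Q C lam)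
    (x : X) (c r₀ : ℝ) (hc : 0 < c) (hr₀ : 0 < r₀)
    (hdecay : ∀ r : ℝ, 0 < r → r < r₀ →
      ∫ y in ball x r, g y ^ Q ∂μ ≤ c * Real.log (1 / r) ^ (-Q - ε)) :
    CauchySeq (fun j : ℕ => ⨍ y in ball x ((1 / 2 : ℝ) ^ j), u y ∂μ) ∧
    ∃ L : ℝ, Tendsto (fun r : ℝ => ⨍ y in ball x r, u y ∂μ) (𝓝[>] 0) (𝓝 L) := by
  obtain ⟨⟨Cμ, hCμ1, hCμtop, hdoub⟩, C₂, hC₂1, hLV⟩ := hQdoub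
  have hQ0 : (0:ℝ) < Q := lt_trans one_pos hQ
  have hlam0 : (0:ℝ) < lam := lt_of_lt_of_le one_pos hlam
  set R : ℝ := lam + r₀ with hRdef
  have hR : 0 < R := by positivity
  have hR1 : 1 < R := by simp only [hRdef]; linarith
  set m₀ : ℝ := (μ (ball x R)).toReal with hm₀def
  have hm₀ : 0 < m₀ := ENNReal.toReal_pos (hballs x R hR).1.ne' (hballs x R hR).2.ne
  set p : ℝ := (Q + ε)/Q with hpdef
  have hp1 : 1 < p := by rw [hpdef, lt_div_iff₀ hQ0]; linarith
  have hC₂0 : (0:ℝ) < C₂ := lt_of_lt_of_le one_pos hC₂1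
  set A : ℝ := (c*C₂/m₀)^(1/Q) with hAdef
  have hA : 0 < A := Real.rpow_pos_of_pos (by positivity) _
  set K₂ : ℝ := 2*C*A*R/lam with hK₂def
  have hK₂ : 0 < K₂ := by positivity
  have hCμ0 : (0:ℝ) ≤ Cμ.toReal := ENNReal.toReal_nonneg
  set K₀ : ℝ := Cμ.toReal * K₂ with hK₀def
  have hK₀0 : 0 ≤ K₀ := by positivity
  -- nonnegativity of the mean oscillation
  have hDpos : ∀ s : ℝ, 0 < s →
      0 ≤ ⨍ y in ball x s, |u y - ⨍ z in ball x s, u z ∂μ| ∂μ := by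
    intro s hs
    rw [setAverage_eq]
    exact smul_nonneg (by positivity)
      (setIntegral_nonneg measurableSet_ball fun y _ => abs_nonneg _)
  -- the main oscillation bound
  have Db : ∀ s : ℝ, 0 < s → lam*s < r₀ → lam*s < 1 →
      ⨍ y in ball x s, |u y - ⨍ z in ball x s, u z ∂μ| ∂μ ≤
        K₂ * Real.log (1/(lam*s)) ^ (-p) := by
    intro s hs h₁ h₂
    have hls : 0 < lam*s := by positivity
    have hLg : 0 < Real.log (1/(lam*s)) := Real.log_pos ((one_lt_div hls).mpr h₂)
    set Lg := Real.log (1/(lam*s)) with hLgdef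
    have hmuls : 0 < (μ (ball x (lam*s))).toReal :=
      ENNReal.toReal_pos (hballs x _ hls).1.ne' (hballs x _ hls).2.ne
    set a0 : ℝ := (lam*s/R)^Q with ha0def
    have hlsR : lam*s ≤ R := le_of_lt (lt_trans h₂ hR1)
    have ha0 : 0 < a0 := Real.rpow_pos_of_pos (by positivity) _
    have hlow : a0 * m₀ ≤ C₂ * (μ (ball x (lam*s))).toReal := by
      have h := hLV x x R (lam*s) (mem_ball_self hR) hls hlsR
      have hBR0 : μ (ball x R) ≠ 0 := (hballs x R hR).1.ne'
      have hBRt : μ (ball x R) ≠ ⊤ := (hballs x R hR).2.ne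
      have h2 : ENNReal.ofReal a0 * μ (ball x R) ≤ ENNReal.ofReal C₂ * μ (ball x (lam*s)) := by
        calc ENNReal.ofReal a0 * μ (ball x R)
            ≤ ENNReal.ofReal C₂ * (μ (ball x (lam*s)) / μ (ball x R)) * μ (ball x R) := by
              gcongr
          _ = ENNReal.ofReal C₂ * μ (ball x (lam*s)) := by
              rw [mul_assoc, ENNReal.div_mul_cancel hBR0 hBRt]
      have hfin : ENNReal.ofReal C₂ * μ (ball x (lam*s)) ≠ ⊤ :=
        ENNReal.mul_ne_top ENNReal.ofReal_ne_top (hballs x _ hls).2.ne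
      have h3 := ENNReal.toReal_mono hfin h2
      rwa [ENNReal.toReal_mul, ENNReal.toReal_mul, ENNReal.toReal_ofReal ha0.le,
        ENNReal.toReal_ofReal hC₂0.le] at h3
    have hI : ∫ y in ball x (lam*s), g y ^ Q ∂μ ≤ c * Lg ^ (-Q - ε) := hdecay (lam*s) hls h₁
    have hInn : 0 ≤ ∫ y in ball x (lam*s), g y ^ Q ∂μ :=
      setIntegral_nonneg measurableSet_ball fun y _ => Real.rpow_nonneg (hg0 y) _
    have hAvg0 : 0 ≤ ⨍ y in ball x (lam*s), g y ^ Q ∂μ := by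
      rw [setAverage_eq]; exact smul_nonneg (by positivity) hInn
    have hAvg : (⨍ y in ball x (lam*s), g y ^ Q ∂μ) ≤ (c*C₂/m₀) * a0⁻¹ * Lg ^ (-Q-ε) := by
      rw [setAverage_eq, smul_eq_mul]
      have h1 : (μ (ball x (lam*s))).toReal⁻¹ ≤ C₂ / (a0*m₀) := by
        rw [inv_eq_one_div, div_le_div_iff₀ hmuls (by positivity)]
        linarith
      calc (μ (ball x (lam*s))).toReal⁻¹ * ∫ y in ball x (lam*s), g y ^ Q ∂μ
          ≤ (C₂/(a0*m₀)) * (c * Lg ^ (-Q-ε)) := by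
            apply mul_le_mul h1 hI hInn (by positivity)
        _ = (c*C₂/m₀) * a0⁻¹ * Lg ^ (-Q-ε) := by field_simp
    have hAvgQ : (⨍ y in ball x (lam*s), g y ^ Q ∂μ) ^ (1/Q) ≤ A * (R/(lam*s)) * Lg ^ (-p) := by
      refine (Real.rpow_le_rpow hAvg0 hAvg (by positivity)).trans_eq ?_
      rw [Real.mul_rpow (by positivity) (Real.rpow_nonneg hLg.le _),
          Real.mul_rpow (by positivity) (by positivity)]
      have e1 : (a0⁻¹) ^ (1/Q) = R/(lam*s) := by
        have e0 : a0 ^ (1/Q) = lam*s/R := by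
          rw [ha0def, ← Real.rpow_mul (by positivity), mul_one_div_cancel hQ0.ne',
            Real.rpow_one]
        rw [← Real.rpow_neg_one a0, ← Real.rpow_mul ha0.le]
        rw [show (-1) * (1/Q) = (1/Q) * (-1) by ring, Real.rpow_mul ha0.le, e0,
          Real.rpow_neg_one, inv_div]
      have e2 : (Lg ^ (-Q-ε)) ^ (1/Q) = Lg ^ (-p) := by
        rw [← Real.rpow_mul hLg.le]
        congr 1
        rw [hpdef]
        field_simp
        ring
      rw [e1, e2, hAdef]
    calc ⨍ y in ball x s, |u y - ⨍ z in ball x s, u z ∂μ| ∂μ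
        ≤ C * diam (ball x s) * (⨍ y in ball x (lam*s), g y ^ Q ∂μ) ^ (1/Q) := hPI x s hs
      _ ≤ C * (2*s) * (A * (R/(lam*s)) * Lg ^ (-p)) := by
          apply mul_le_mul
          · exact mul_le_mul_of_nonneg_left (diam_ball hs.le) hC.le
          · exact hAvgQ
          · exact Real.rpow_nonneg hAvg0 _
          · positivity
      _ = K₂ * Lg ^ (-p) := by
          rw [hK₂def]
          field_simp
  -- combining with the doubling property
  have step : ∀ r s : ℝ, 0 < r → r ≤ s → s ≤ 2*r → lam*s < r₀ → lam*s < 1 →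
      |(⨍ y in ball x r, u y ∂μ) - ⨍ y in ball x s, u y ∂μ| ≤
        K₀ * Real.log (1/(lam*s)) ^ (-p) := by
    intro r s hr hrs hs2 h₁ h₂
    have hs : 0 < s := lt_of_lt_of_le hr hrs
    have h0 : μ (ball x r) ≠ 0 := (hballs x r hr).1.ne'
    have hfin : μ (ball x s) ≠ ⊤ := (hballs x s hs).2.ne
    have hAd := avg_diff_le μ u (ball_subset_ball hrs) h0 hfin (hu x s hs)
    have hratio : (μ (ball x s)).toReal / (μ (ball x r)).toReal ≤ Cμ.toReal := by
      have h1 : μ (ball x s) ≤ Cμ * μ (ball x r) :=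
        le_trans (measure_mono (ball_subset_ball hs2)) (hdoub x r hr)
      have h2 := ENNReal.toReal_mono (ENNReal.mul_ne_top hCμtop.ne (hballs x r hr).2.ne) h1
      rw [ENNReal.toReal_mul] at h2
      rw [div_le_iff₀ (ENNReal.toReal_pos h0 (hballs x r hr).2.ne)]
      exact h2
    calc |(⨍ y in ball x r, u y ∂μ) - ⨍ y in ball x s, u y ∂μ|
        ≤ (μ (ball x s)).toReal / (μ (ball x r)).toReal *
            ⨍ y in ball x s, |u y - ⨍ z in ball x s, u z ∂μ| ∂μ := hAd
      _ ≤ Cμ.toReal * ⨍ y in ball x s, |u y - ⨍ z in ball x s, u z ∂μ| ∂μ :=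
          mul_le_mul_of_nonneg_right hratio (hDpos s hs)
      _ ≤ Cμ.toReal * (K₂ * Real.log (1/(lam*s)) ^ (-p)) :=
          mul_le_mul_of_nonneg_left (Db s hs h₁ h₂) hCμ0
      _ = K₀ * Real.log (1/(lam*s)) ^ (-p) := (mul_assoc _ _ _).symm
  -- the sequence of averages
  set a : ℕ → ℝ := fun j => ⨍ y in ball x ((1/2:ℝ)^j), u y ∂μ with hadef
  set β : ℝ := Real.log 2 / 2 with hβdef
  have hlog2pos : 0 < Real.log 2 := Real.log_pos one_lt_two
  have hβ : 0 < β := by rw [hβdef]; linarith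
  have h2β : Real.log 2 = 2*β := by rw [hβdef]; ring
  have hLj : ∀ j : ℕ, Real.log (1/(lam*(1/2:ℝ)^j)) = j * Real.log 2 - Real.log lam := by
    intro j
    have hlog2 : Real.log ((1/2:ℝ)) = -Real.log 2 := by rw [one_div, Real.log_inv]
    rw [one_div, Real.log_inv, Real.log_mul hlam0.ne' (by positivity), Real.log_pow, hlog2]
    push_cast; ring
  have hev : ∀ᶠ j : ℕ in atTop,
      (lam*(1/2:ℝ)^j < r₀ ∧ lam*(1/2:ℝ)^j < 1) ∧ Real.log lam ≤ (j:ℝ)*β := by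
    have ht : Tendsto (fun j : ℕ => lam*(1/2:ℝ)^j) atTop (𝓝 0) := by
      simpa using (tendsto_pow_atTop_nhds_zero_of_lt_one
        (by norm_num : (0:ℝ) ≤ 1/2) (by norm_num)).const_mul lam
    have h1 := ht.eventually_lt_const hr₀
    have h2 := ht.eventually_lt_const one_pos
    have h3 : Tendsto (fun j : ℕ => (j:ℝ)*β) atTop atTop :=
      Tendsto.atTop_mul_const hβ tendsto_natCast_atTop_atTop
    exact (h1.and h2).and (h3.eventually_ge_atTop _)
  obtain ⟨j₀', hj₀'⟩ := eventually_atTop.mp hev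
  set j₀ : ℕ := max j₀' 1 with hj₀def
  set K₁ : ℝ := K₀ * β^(-p) with hK₁def
  have hK₁0 : 0 ≤ K₁ := mul_nonneg hK₀0 (Real.rpow_nonneg hβ.le _)
  have hjbound : ∀ j : ℕ, j₀ ≤ j →
      K₀ * Real.log (1/(lam*(1/2:ℝ)^j)) ^ (-p) ≤ K₁ * ((j:ℝ)^p)⁻¹ := by
    intro j hj
    have hj1 : 1 ≤ j := le_trans (le_max_right _ _) hj
    have hcond := hj₀' j (le_trans (le_max_left _ _) hj)
    have hj1' : (1:ℝ) ≤ (j:ℝ) := by exact_mod_cast hj1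
    have hβj : 0 < β*(j:ℝ) := mul_pos hβ (lt_of_lt_of_le one_pos hj1')
    have hle : β*(j:ℝ) ≤ Real.log (1/(lam*(1/2:ℝ)^j)) := by
      rw [hLj j, h2β]
      nlinarith [hcond.2]
    have h4 : Real.log (1/(lam*(1/2:ℝ)^j)) ^ (-p) ≤ (β*(j:ℝ)) ^ (-p) :=
      Real.rpow_le_rpow_of_nonpos hβj hle (by linarith)
    calc K₀ * Real.log (1/(lam*(1/2:ℝ)^j)) ^ (-p) ≤ K₀ * (β*(j:ℝ)) ^ (-p) :=
        mul_le_mul_of_nonneg_left h4 hK₀0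
      _ = K₁ * ((j:ℝ)^p)⁻¹ := by
        rw [hK₁def, Real.mul_rpow hβ.le (Nat.cast_nonneg j), mul_assoc,
          Real.rpow_neg (Nat.cast_nonneg j), hK₀def]
        ring
  have hdistj : ∀ j : ℕ, j₀ ≤ j → dist (a j) (a (j+1)) ≤ K₁ * ((j:ℝ)^p)⁻¹ := by
    intro j hj
    have hcond := hj₀' j (le_trans (le_max_left _ _) hj)
    have hr : (0:ℝ) < (1/2:ℝ)^(j+1) := by positivity
    have hs2 : ((1/2:ℝ))^j = 2*(1/2:ℝ)^(j+1) := by rw [pow_succ]; ring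
    have hrs : ((1/2:ℝ))^(j+1) ≤ (1/2:ℝ)^j :=
      pow_le_pow_of_le_one (by norm_num) (by norm_num) (Nat.le_succ j)
    have h := step ((1/2:ℝ)^(j+1)) ((1/2:ℝ)^j) hr hrs hs2.le hcond.1.1 hcond.1.2
    rw [dist_comm, Real.dist_eq]
    exact h.trans (hjbound j hj)
  set d : ℕ → ℝ := fun j => if j < j₀ then dist (a j) (a (j+1)) else K₁ * ((j:ℝ)^p)⁻¹ with hddef
  have hsum0 : Summable (fun j : ℕ => K₁ * ((j:ℝ)^p)⁻¹) :=
    (Real.summable_nat_rpow_inv.mpr hp1).mul_left _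
  have hsumd : Summable d := by
    refine (summable_nat_add_iff j₀).mp ?_
    refine ((summable_nat_add_iff j₀).mpr hsum0).congr fun n => ?_
    simp only [hddef]
    rw [if_neg (by omega)]
  have hcauchy : CauchySeq a := by
    apply cauchySeq_of_dist_le_of_summable d ?_ hsumd
    intro n
    by_cases h : n < j₀
    · simp [hddef, h]
    · simp only [hddef, if_neg h]
      exact hdistj n (not_lt.mp h)
  refine ⟨hcauchy, ?_⟩
  obtain ⟨L, hL⟩ := cauchySeq_tendsto_of_complete hcauchy
  refine ⟨L, ?_⟩
  rw [Metric.tendsto_nhdsWithin_nhds]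
  intro η hη
  have htend0 : Tendsto (fun j : ℕ => K₁ * ((j:ℝ)^p)⁻¹) atTop (𝓝 0) := by
    have h1 : Tendsto (fun j : ℕ => ((j:ℝ)^p)) atTop atTop :=
      (tendsto_rpow_atTop (by linarith)).comp tendsto_natCast_atTop_atTop
    simpa using (h1.inv_tendsto_atTop).const_mul K₁
  obtain ⟨J₁, hJ₁⟩ := eventually_atTop.mp
    (htend0.eventually_lt_const (by linarith : (0:ℝ) < η/2))
  obtain ⟨J₂, hJ₂⟩ := Metric.tendsto_atTop.mp hL (η/2) (by linarith)
  set J : ℕ := max (max J₁ J₂) j₀ with hJdef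
  refine ⟨(1/2:ℝ)^J, by positivity, ?_⟩
  intro r hrmem hrd
  have hr : 0 < r := hrmem
  have hrd' : r < (1/2:ℝ)^J := by
    have : dist r 0 = r := by rw [Real.dist_eq, sub_zero, abs_of_pos hr]
    rwa [this] at hrd
  have hex : ∃ n : ℕ, (1/2:ℝ)^(n+1) < r := by
    obtain ⟨n, hn⟩ := ((tendsto_pow_atTop_nhds_zero_of_lt_one
      (by norm_num : (0:ℝ) ≤ 1/2) (by norm_num)).eventually_lt_const hr).exists
    exact ⟨n, lt_of_le_of_lt
      (pow_le_pow_of_le_one (by norm_num) (by norm_num) (Nat.le_succ n)) hn⟩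
  set j : ℕ := Nat.find hex with hjdef
  have hj1 : (1/2:ℝ)^(j+1) < r := Nat.find_spec hex
  have hJj : J < j+1 :=
    (pow_lt_pow_iff_right_of_lt_one₀ (by norm_num) (by norm_num)).mp (lt_trans hj1 hrd')
  have hJj' : J ≤ j := Nat.lt_succ_iff.mp hJj
  have hj2 : r ≤ (1/2:ℝ)^j := by
    rcases Nat.eq_zero_or_pos j with h0 | hpos
    · rw [h0, pow_zero]
      exact le_of_lt (lt_of_lt_of_le hrd' (pow_le_one₀ (by norm_num) (by norm_num)))
    · have hmin := Nat.find_min hex (m := j - 1) (by omega)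
      push_neg at hmin
      have hjj : j - 1 + 1 = j := by omega
      rwa [hjj] at hmin
  have hj₀j : j₀ ≤ j := le_trans (le_max_right _ _) hJj'
  have hcond := hj₀' j (le_trans (le_max_left _ _) hj₀j)
  have hs2 : (1/2:ℝ)^j ≤ 2*r := by
    rw [pow_succ] at hj1
    linarith
  have hstep := step r ((1/2:ℝ)^j) hr hj2 hs2 hcond.1.1 hcond.1.2
  have h5 : |(⨍ y in ball x r, u y ∂μ) - a j| ≤ K₁*((j:ℝ)^p)⁻¹ :=
    hstep.trans (hjbound j hj₀j)
  have hJ1j : J₁ ≤ j := le_trans (le_trans (le_max_left _ _) (le_max_left _ _)) hJj'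
  have hJ2j : J₂ ≤ j := le_trans (le_trans (le_max_right _ _) (le_max_left _ _)) hJj'
  calc dist (⨍ y in ball x r, u y ∂μ) L
      ≤ dist (⨍ y in ball x r, u y ∂μ) (a j) + dist (a j) L := dist_triangle _ _ _
    _ < η/2 + η/2 := add_lt_add
        (lt_of_le_of_lt (by rw [Real.dist_eq]; exact h5) (hJ₁ j hJ1j)) (hJ₂ j hJ2j)
    _ = η := by ring
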